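/- Let k,k' ≥ 1, p,p' ≥ 1 with gcd(p,q) = gcd(p',q') = 1, and suppose Φ ∈ GL(2,ℤ) satisfies f_{k,p,q}(Φ b) = f_{k',p',q'}(b) for all b in an open dense subset of some neighbourhood of 0 in ℝ², where f_{k,p,q}(b) = min{b₁, b₁(1−kpq)+b₂kp²}. Then k = k', p = p', and q ≡ ±q' mod p. -/

import Mathlib

lemma abs_pair (u1 u2 v1 v2 : ℝ)
    (h : ∀ x y : ℝ, |u1*x + u2*y| = |v1*x + v2*y|) :
    (u1 = v1 ∧ u2 = v2) ∨ (u1 = -v1 ∧ u2 = -v2) := by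
  rcases abs_eq_abs.mp (h 1 0) with e1|e1 <;>
  rcases abs_eq_abs.mp (h 0 1) with e2|e2 <;>
  rcases abs_eq_abs.mp (h 1 1) with e3|e3 <;>
  first
    | (left; constructor <;> linarith)
    | (right; constructor <;> linarith)

lemma minlin (a1 a2 b1 b2 c1 c2 d1 d2 : ℝ)
    (h : ∀ x y : ℝ, min (a1*x+a2*y) (b1*x+b2*y) = min (c1*x+c2*y) (d1*x+d2*y)) :
    (a1 = c1 ∧ a2 = c2 ∧ b1 = d1 ∧ b2 = d2) ∨ (a1 = d1 ∧ a2 = d2 ∧ b1 = c1 ∧ b2 = c2) := by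
  have hmax : ∀ x y : ℝ, max (a1*x+a2*y) (b1*x+b2*y) = max (c1*x+c2*y) (d1*x+d2*y) := by
    intro x y
    have H := h (-x) (-y)
    rw [show a1*(-x)+a2*(-y) = -(a1*x+a2*y) from by ring,
        show b1*(-x)+b2*(-y) = -(b1*x+b2*y) from by ring,
        show c1*(-x)+c2*(-y) = -(c1*x+c2*y) from by ring,
        show d1*(-x)+d2*(-y) = -(d1*x+d2*y) from by ring,
        min_neg_neg, min_neg_neg, neg_inj] at H
    exact H
  have hs1 : a1 + b1 = c1 + d1 := by
    have h1 := h 1 0; have h2 := hmax 1 0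
    have := congrArg₂ (· + ·) h1 h2
    simp only [min_add_max] at this; linarith [this]
  have hs2 : a2 + b2 = c2 + d2 := by
    have h1 := h 0 1; have h2 := hmax 0 1
    have := congrArg₂ (· + ·) h1 h2
    simp only [min_add_max] at this; linarith [this]
  have habs : ∀ x y : ℝ, |(b1-a1)*x + (b2-a2)*y| = |(d1-c1)*x + (d2-c2)*y| := by
    intro x y
    have := congrArg₂ (· - ·) (hmax x y) (h x y)
    simp only [max_sub_min_eq_abs] at this
    rw [show (b1-a1)*x + (b2-a2)*y = (b1*x+b2*y) - (a1*x+a2*y) from by ring,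
        show (d1-c1)*x + (d2-c2)*y = (d1*x+d2*y) - (c1*x+c2*y) from by ring]
    exact this
  rcases abs_pair _ _ _ _ habs with ⟨e1, e2⟩ | ⟨e1, e2⟩
  · left; refine ⟨by linarith, by linarith, by linarith, by linarith⟩
  · right; refine ⟨by linarith, by linarith, by linarith, by linarith⟩

lemma int1 (k k' p q p' q' A : ℤ) (hk : 1 ≤ k) (hk' : 1 ≤ k') (hp : 1 ≤ p) (hp' : 1 ≤ p')
    (hpq : Int.gcd p q = 1) (hpq' : Int.gcd p' q' = 1)
    (h2 : k*p^2 = k'*p'^2) (h1 : k*p^2*A = k*p*q - k'*p'*q') :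
    k = k' ∧ p = p' ∧ p ∣ q - q' := by
  have hk0 : (k : ℤ) ≠ 0 := by omega
  have hp0 : (p : ℤ) ≠ 0 := by omega
  have hkp : k*p ≠ 0 := mul_ne_zero hk0 hp0
  have key : p*p'*A = q*p' - p*q' := by
    have e : (k*p) * (p*p'*A) = (k*p) * (q*p' - p*q') := by
      have hthis := congrArg (· * p') h1
      linear_combination hthis + q'*h2
    exact mul_left_cancel₀ hkp e
  have hcp : IsCoprime p q := Int.isCoprime_iff_gcd_eq_one.mpr hpq
  have hcp' : IsCoprime p' q' := Int.isCoprime_iff_gcd_eq_one.mpr hpq'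
  have d1 : p ∣ q * p' := ⟨p'*A + q', by linear_combination -key⟩
  have d2 : p' ∣ p * q' := ⟨q - p*A, by linear_combination key⟩
  have dp : p ∣ p' := hcp.dvd_of_dvd_mul_left d1
  have dp' : p' ∣ p := hcp'.dvd_of_dvd_mul_right d2
  have hpp : p = p' := Int.dvd_antisymm (by omega) (by omega) dp dp'
  have hkk : k = k' := by
    rw [← hpp] at h2
    exact mul_right_cancel₀ (pow_ne_zero 2 hp0) h2
  refine ⟨hkk, hpp, ⟨A, ?_⟩⟩
  rw [← hpp] at key
  have e : p * (q - q') = p * (p * A) := by linear_combination -key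
  have := mul_left_cancel₀ hp0 e
  linarith [this]

lemma int2 (k k' p q p' q' A B ε : ℤ) (hk : 1 ≤ k) (hk' : 1 ≤ k') (hp : 1 ≤ p) (hp' : 1 ≤ p')
    (hpq : Int.gcd p q = 1) (hpq' : Int.gcd p' q' = 1)
    (hA : k*p^2*A = 1 - (1-k*p*q)*(1-k'*p'*q'))
    (hB : k*p^2*B = -((1-k*p*q)*(k'*p'^2)))
    (hdet : (1-k'*p'*q')*B - (k'*p'^2)*A = ε)
    (hε : ε = 1 ∨ ε = -1) :
    k = k' ∧ p = p' ∧ p ∣ q + q' := by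
  have hk0 : (k : ℤ) ≠ 0 := by omega
  have hp0 : (p : ℤ) ≠ 0 := by omega
  have hdet2 : k*p^2*ε = -(k'*p'^2) := by
    linear_combination -(k*p^2)*hdet + (1-k'*p'*q')*hB - (k'*p'^2)*hA
  have h2 : k*p^2 = k'*p'^2 := by
    rcases hε with rfl | rfl
    · nlinarith [hdet2]
    · linarith [hdet2]
  have hkp : k*p ≠ 0 := mul_ne_zero hk0 hp0
  have key : p*p'*A = q*p' + p*q' - k*p*q*(p*q') := by
    have e : (k*p) * (p*p'*A) = (k*p) * (q*p' + p*q' - k*p*q*(p*q')) := by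
      have hthis := congrArg (· * p') hA
      linear_combination hthis - q'*h2 + k*p*q*q'*h2
    exact mul_left_cancel₀ hkp e
  have hcp : IsCoprime p q := Int.isCoprime_iff_gcd_eq_one.mpr hpq
  have d1 : p ∣ q * p' := ⟨p'*A - q' + k*p*q*q', by linear_combination -key⟩
  have dp : p ∣ p' := hcp.dvd_of_dvd_mul_left d1
  obtain ⟨s, rfl⟩ := dp
  have hs1 : 1 ≤ s := by nlinarith [hp', hp]
  have hks : k = k' * s^2 := by
    have e : k * p^2 = (k' * s^2) * p^2 := by linear_combination h2
    exact mul_right_cancel₀ (pow_ne_zero 2 hp0) e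
  have key2 : p*s*A = q*s + q' - k*p*q*q' := by
    have e : p * (p*s*A) = p * (q*s + q' - k*p*q*q') := by linear_combination key
    exact mul_left_cancel₀ hp0 e
  have ds : s ∣ q' := by
    have t1 : s ∣ q' - k*p*q*q' := ⟨p*A - q, by linear_combination -key2⟩
    have t2 : s ∣ k*p*q*q' := ⟨k'*s*p*q*q', by rw [hks]; ring⟩
    have := dvd_add t1 t2
    simpa using this
  have ds' : s ∣ p * s := ⟨p, by ring⟩
  have hsg : s ∣ ((Int.gcd (p*s) q' : ℕ) : ℤ) := Int.dvd_coe_gcd ds' ds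
  rw [hpq'] at hsg
  have hs : s = 1 := by
    rcases Int.isUnit_iff.mp (isUnit_of_dvd_one (by exact_mod_cast hsg)) with h | h <;> omega
  subst hs
  refine ⟨by linear_combination hks, by ring, ⟨A + k*q*q', ?_⟩⟩
  linear_combination -key2

/-- The germ function `f_{k,p,q}(b) = min{b₁, b₁(1−kpq) + b₂kp²}`. -/
noncomputable def f (k p q : ℤ) (b : ℝ × ℝ) : ℝ :=
  min b.1 (b.1 * (1 - (k : ℝ) * (p : ℝ) * (q : ℝ)) + b.2 * ((k : ℝ) * (p : ℝ) ^ 2))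

/-- The linear action on ℝ² of an integer 2×2 matrix. -/
def apply2 (Φ : Matrix (Fin 2) (Fin 2) ℤ) (b : ℝ × ℝ) : ℝ × ℝ :=
  ((Φ 0 0 : ℝ) * b.1 + (Φ 0 1 : ℝ) * b.2, (Φ 1 0 : ℝ) * b.1 + (Φ 1 1 : ℝ) * b.2)

/-- If `Φ ∈ GL(2,ℤ)` intertwines `f_{k,p,q}` and `f_{k',p',q'}` on an open dense subset of some
neighbourhood of 0, then `k = k'`, `p = p'` and `q ≡ ±q' (mod p)`. -/
theorem stmt7 (k k' p q p' q' : ℤ) (hk : 1 ≤ k) (hk' : 1 ≤ k') (hp : 1 ≤ p) (hp' : 1 ≤ p')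
    (hpq : Int.gcd p q = 1) (hpq' : Int.gcd p' q' = 1)
    (Φ : Matrix (Fin 2) (Fin 2) ℤ) (hΦ : IsUnit Φ.det)
    (U D : Set (ℝ × ℝ)) (hU : U ∈ nhds (0 : ℝ × ℝ)) (hDU : D ⊆ U) (hDopen : IsOpen D)
    (hDdense : U ⊆ closure D)
    (heq : ∀ b ∈ D, f k p q (apply2 Φ b) = f k' p' q' b) :
    k = k' ∧ p = p' ∧ (q ≡ q' [ZMOD p] ∨ q ≡ -q' [ZMOD p]) := by
  -- Step 1: extend the equation to all of ℝ²
  have hcont1 : Continuous fun b : ℝ × ℝ => f k p q (apply2 Φ b) := by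
    unfold f apply2; fun_prop
  have hcont2 : Continuous (f k' p' q') := by
    unfold f; fun_prop
  have hU0 : ∀ b ∈ U, f k p q (apply2 Φ b) = f k' p' q' b := by
    intro b hb
    exact (Set.EqOn.closure (fun x hx => heq x hx) hcont1 hcont2) (hDdense hb)
  have hsmul : ∀ (K P Q : ℤ) (c : ℝ), 0 ≤ c → ∀ b : ℝ × ℝ, f K P Q (c • b) = c * f K P Q b := by
    intro K P Q c hc b
    simp only [f, Prod.smul_fst, Prod.smul_snd, smul_eq_mul]
    rw [mul_min_of_nonneg _ _ hc]
    congr 1 <;> ring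
  have hap : ∀ (c : ℝ) (b : ℝ × ℝ), apply2 Φ (c • b) = c • apply2 Φ b := by
    intro c b
    refine Prod.ext ?_ ?_ <;> simp [apply2] <;> ring
  have hall : ∀ b : ℝ × ℝ, f k p q (apply2 Φ b) = f k' p' q' b := by
    intro b
    obtain ⟨ε, hε, hball⟩ := Metric.mem_nhds_iff.mp hU
    have hb0 : (0:ℝ) ≤ ‖b‖ := norm_nonneg b
    set c : ℝ := ε / (2 * (‖b‖ + 1)) with hcdef
    have hc : 0 < c := by positivity
    have hmem : c • b ∈ U := by
      apply hball
      rw [Metric.mem_ball, dist_zero_right, norm_smul, Real.norm_eq_abs, abs_of_pos hc]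
      have h1 : c * (2*(‖b‖+1)) = ε := by
        rw [hcdef]; field_simp
      nlinarith [hc, hb0, h1]
    have H := hU0 _ hmem
    rw [hap c b, hsmul k p q c hc.le, hsmul k' p' q' c hc.le] at H
    exact mul_left_cancel₀ (ne_of_gt hc) H
  -- Step 2: identify the linear pieces
  have hml := minlin ((Φ 0 0 : ℝ)) ((Φ 0 1 : ℝ))
      ((1-(k:ℝ)*p*q)*(Φ 0 0 : ℝ) + (k:ℝ)*(p:ℝ)^2*(Φ 1 0 : ℝ))
      ((1-(k:ℝ)*p*q)*(Φ 0 1 : ℝ) + (k:ℝ)*(p:ℝ)^2*(Φ 1 1 : ℝ))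
      1 0 (1-(k':ℝ)*p'*q') ((k':ℝ)*(p':ℝ)^2)
      (by
        intro x y
        have H := hall (x, y)
        simp only [f, apply2] at H
        convert H using 2 <;> ring)
  -- Step 3: determinant
  have hdet := Int.isUnit_iff.mp hΦ
  rw [Matrix.det_fin_two] at hdet
  rcases hml with ⟨ha1, ha2, hb1, hb2⟩ | ⟨ha1, ha2, hb1, hb2⟩
  · -- Case 1: no swap
    have e00 : Φ 0 0 = 1 := by exact_mod_cast ha1
    have e01 : Φ 0 1 = 0 := by exact_mod_cast ha2
    have E1 : (1-k*p*q)*(Φ 0 0) + k*p^2*(Φ 1 0) = 1 - k'*p'*q' := by exact_mod_cast hb1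
    have E2 : (1-k*p*q)*(Φ 0 1) + k*p^2*(Φ 1 1) = k'*p'^2 := by exact_mod_cast hb2
    rw [e01] at E2
    have h2 : k*p^2*(Φ 1 1) = k'*p'^2 := by linarith [E2]
    have hd : Φ 1 1 = 1 := by
      rw [e00, e01] at hdet
      rcases hdet with h | h
      · omega
      · exfalso
        have h11 : Φ 1 1 = -1 := by omega
        rw [h11] at h2
        nlinarith [h2, hk, hk', hp, hp']
    rw [hd, mul_one] at h2
    have h1 : k*p^2*(Φ 1 0) = k*p*q - k'*p'*q' := by
      rw [e00] at E1; linarith [E1]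
    obtain ⟨c1, c2, c3⟩ := int1 k k' p q p' q' (Φ 1 0) hk hk' hp hp' hpq hpq' h2 h1
    exact ⟨c1, c2, Or.inl (Int.ModEq.symm (Int.modEq_iff_dvd.mpr c3))⟩
  · -- Case 2: swap
    have e00 : Φ 0 0 = 1 - k'*p'*q' := by exact_mod_cast ha1
    have e01 : Φ 0 1 = k'*p'^2 := by exact_mod_cast ha2
    have E1 : (1-k*p*q)*(Φ 0 0) + k*p^2*(Φ 1 0) = 1 := by exact_mod_cast hb1
    have E2 : (1-k*p*q)*(Φ 0 1) + k*p^2*(Φ 1 1) = 0 := by exact_mod_cast hb2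
    have hA : k*p^2*(Φ 1 0) = 1 - (1-k*p*q)*(1-k'*p'*q') := by
      rw [e00] at E1; linarith [E1]
    have hB : k*p^2*(Φ 1 1) = -((1-k*p*q)*(k'*p'^2)) := by
      rw [e01] at E2; linarith [E2]
    have hdet' : (1-k'*p'*q')*(Φ 1 1) - (k'*p'^2)*(Φ 1 0) = Φ 0 0 * Φ 1 1 - Φ 0 1 * Φ 1 0 := by
      rw [e00, e01]
    obtain ⟨c1, c2, c3⟩ := int2 k k' p q p' q' (Φ 1 0) (Φ 1 1)
      (Φ 0 0 * Φ 1 1 - Φ 0 1 * Φ 1 0) hk hk' hp hp' hpq hpq' hA hB hdet' hdet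
    refine ⟨c1, c2, Or.inr ?_⟩
    have : p ∣ -q' - q := by
      have e : -q' - q = -(q + q') := by ring
      rw [e]; exact dvd_neg.mpr c3
    exact Int.modEq_iff_dvd.mpr this
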